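/- Let A, B_1, ..., B_N be bounded operators such that A + sum_{i in D} B_i is invertible for every subset D of {1,...,N}. Then (A + sum_{i=1}^N B_i)^{-1} equals the sum over n from 0 to N, with sign (-1)^n, over ordered sequences of distinct indices (i_1,...,i_n) from {1,...,N}, of A^{-1} O_n A^{-1} ... O_1 A^{-1}, where O_p = B_{i_p} - (sum_{k=1}^{p} B_{i_k}) (A + sum_{k=1}^{p} B_{i_k})^{-1} B_{i_p}. -/

import Mathlib

section Aux

variable {R : Type*} [Ring R]

private lemma prod_shift {γ : Type*} (x : R) (f : γ → R) (l : List γ) :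
    x * (l.map (fun p => f p * x)).prod = (l.map (fun p => x * f p)).prod * x := by
  induction l with
  | nil => simp
  | cons a l ih =>
      simp only [List.map_cons, List.prod_cons]
      rw [mul_assoc (f a) x, ← mul_assoc x (f a), mul_assoc (x * f a), ih,
        ← mul_assoc]

private lemma Iic_zero_fin (n : ℕ) : Finset.Iic (0 : Fin (n+1)) = {0} := by
  ext k; simp [Fin.le_zero_iff]

private lemma sum_Iic_succ {n : ℕ} (g : Fin (n+1) → R) (q : Fin n) :
    ∑ k ∈ Finset.Iic q.succ, g k = g 0 + ∑ k ∈ Finset.Iic q, g k.succ := by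
  have h : Finset.Iic q.succ = insert 0 ((Finset.Iic q).map (Fin.succEmb n)) := by
    ext k
    simp only [Finset.mem_Iic, Finset.mem_insert, Finset.mem_map, Fin.succEmb]
    constructor
    · intro hk
      rcases Fin.eq_zero_or_eq_succ k with h0 | ⟨j, rfl⟩
      · exact Or.inl h0
      · exact Or.inr ⟨j, by simpa [Fin.succ_le_succ_iff] using hk, rfl⟩
    · rintro (rfl | ⟨j, hj, rfl⟩)
      · exact Fin.zero_le _
      · exact Fin.succ_le_succ_iff.mpr hj
  rw [h, Finset.sum_insert, Finset.sum_map]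
  · rfl
  · simp [Fin.succEmb, Fin.succ_ne_zero, eq_comm]

variable {N : ℕ} (B : Fin N → R)

/-- The basic term of the (rewritten) expansion. -/
private noncomputable def Pterm (A : R) {n : ℕ} (σ : Fin n ↪ Fin N) : R :=
  (((List.finRange n).reverse.map (fun p : Fin n =>
      Ring.inverse (A + ∑ k ∈ Finset.Iic p, B (σ k)) * B (σ p))).prod) * Ring.inverse A

/-- embeddings with range inside `S` -/
private noncomputable def ES (S : Finset (Fin N)) (n : ℕ) : Finset (Fin n ↪ Fin N) :=
  Finset.univ.filter (fun σ => ∀ p, σ p ∈ S)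

private lemma Pterm_zero (A : R) (σ : Fin 0 ↪ Fin N) : Pterm B A σ = Ring.inverse A := by
  simp [Pterm, List.finRange]

private lemma Pterm_cons (A : R) {m : ℕ} (i : Fin N) (σ' : Fin m ↪ Fin N)
    (τ : Fin (m+1) ↪ Fin N) (h0 : τ 0 = i) (hs : ∀ q : Fin m, τ q.succ = σ' q) :
    Pterm B A τ = Pterm B (A + B i) σ' * B i * Ring.inverse A := by
  unfold Pterm
  rw [List.finRange_succ, List.reverse_cons, List.map_append, List.prod_append,
    List.map_reverse, List.map_map, List.map_reverse]
  have hf0 : Ring.inverse (A + ∑ k ∈ Finset.Iic (0 : Fin (m+1)), B (τ k)) * B (τ 0)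
      = Ring.inverse (A + B i) * B i := by
    rw [Iic_zero_fin, Finset.sum_singleton, h0]
  have hfs : ((fun p : Fin (m+1) =>
        Ring.inverse (A + ∑ k ∈ Finset.Iic p, B (τ k)) * B (τ p)) ∘ Fin.succ)
      = (fun q : Fin m =>
        Ring.inverse ((A + B i) + ∑ k ∈ Finset.Iic q, B (σ' k)) * B (σ' q)) := by
    funext q
    simp only [Function.comp_apply]
    have hsum : ∑ k ∈ Finset.Iic q, B (τ k.succ) = ∑ k ∈ Finset.Iic q, B (σ' k) :=
      Finset.sum_congr rfl (fun k _ => by rw [hs k])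
    rw [sum_Iic_succ (fun k => B (τ k)) q, h0, hs q, ← add_assoc, hsum]
  rw [hfs]
  simp only [List.map_cons, List.map_nil, List.prod_cons, List.prod_nil, mul_one, hf0]
  rw [mul_assoc, mul_assoc, ← mul_assoc (Ring.inverse (A + B i)), ← mul_assoc, ← mul_assoc]

private lemma ES_zero (S : Finset (Fin N)) : ES S 0 = (Finset.univ : Finset (Fin 0 ↪ Fin N)) := by
  apply Finset.filter_true_of_mem
  intro σ _ p
  exact absurd p.2 (by omega)

private lemma cons_inj (i : Fin N) (σ' : Fin m ↪ Fin N) (hne : ∀ q, σ' q ≠ i) :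
    Function.Injective (Fin.cons i ⇑σ' : Fin (m+1) → Fin N) := by
  intro a b hab
  rcases Fin.eq_zero_or_eq_succ a with rfl | ⟨p, rfl⟩ <;>
    rcases Fin.eq_zero_or_eq_succ b with rfl | ⟨q, rfl⟩
  · rfl
  · rw [Fin.cons_zero, Fin.cons_succ] at hab; exact absurd hab.symm (hne q)
  · rw [Fin.cons_succ, Fin.cons_zero] at hab; exact absurd hab (hne p)
  · rw [Fin.cons_succ, Fin.cons_succ] at hab; rw [σ'.injective hab]

/-- Splitting of the sum over embeddings of `Fin (m+1)` into `S`,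
according to the image of `0`. -/
private lemma sum_ES_succ (A : R) (S : Finset (Fin N)) (m : ℕ) :
    ∑ σ ∈ ES S (m+1), Pterm B A σ =
      ∑ i ∈ S, ∑ σ' ∈ ES (S.erase i) m,
        Pterm B (A + B i) σ' * B i * Ring.inverse A := by
  rw [← Finset.sum_sigma (S) (fun i => ES (S.erase i) m)
      (fun x => Pterm B (A + B x.1) x.2 * B x.1 * Ring.inverse A)]
  refine Finset.sum_bij'
    (fun σ _ => ⟨σ 0, (Fin.succEmb m).trans σ⟩)
    (fun x hx => ⟨Fin.cons x.1 ⇑x.2, cons_inj x.1 x.2 (fun q => by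
      have h2 := (Finset.mem_sigma.mp hx).2
      simp only [ES, Finset.mem_filter] at h2
      exact Finset.ne_of_mem_erase (h2.2 q))⟩)
    ?_ ?_ ?_ ?_ ?_
  · intro σ hσ
    simp only [ES, Finset.mem_filter, Finset.mem_univ, true_and] at hσ
    refine Finset.mem_sigma.mpr ⟨hσ 0, ?_⟩
    simp only [ES, Finset.mem_filter, Finset.mem_univ, true_and]
    intro p
    refine Finset.mem_erase.mpr ⟨?_, hσ _⟩
    exact fun h => Fin.succ_ne_zero p (σ.injective h)
  · intro x hx
    rcases Finset.mem_sigma.mp hx with ⟨h1, h2⟩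
    simp only [ES, Finset.mem_filter, Finset.mem_univ, true_and] at h2 ⊢
    intro p
    rcases Fin.eq_zero_or_eq_succ p with rfl | ⟨q, rfl⟩
    · simpa using h1
    · simpa using Finset.mem_of_mem_erase (h2 q)
  · intro σ hσ
    apply Function.Embedding.ext
    intro p
    rcases Fin.eq_zero_or_eq_succ p with rfl | ⟨q, rfl⟩
    · simp
    · simp
  · intro x hx
    rcases x with ⟨i, σ'⟩
    refine Sigma.ext (by simp) (heq_of_eq (Function.Embedding.ext fun q => by simp))
  · intro σ hσ
    exact Pterm_cons B A (σ 0) ((Fin.succEmb m).trans σ) σ rfl (fun q => rfl)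

private theorem gen (S : Finset (Fin N)) :
    ∀ A : R, (∀ D ⊆ S, IsUnit (A + ∑ i ∈ D, B i)) →
    Ring.inverse (A + ∑ i ∈ S, B i) =
      ∑ n ∈ Finset.range (S.card + 1), ((-1 : ℤ) ^ n) • ∑ σ ∈ ES S n, Pterm B A σ := by
  induction S using Finset.strongInduction with
  | _ S ih =>
    intro A hinv
    have hA : IsUnit A := by simpa using hinv ∅ (Finset.empty_subset S)
    have hzero : ((-1 : ℤ) ^ 0) • ∑ σ ∈ ES S 0, Pterm B A σ = Ring.inverse A := by
      rw [pow_zero, one_smul, ES_zero]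
      rw [Finset.sum_congr rfl (fun σ _ => Pterm_zero B A σ)]
      simp
    rcases S.eq_empty_or_nonempty with rfl | hS
    · simpa using hzero.symm
    · set c := S.card with hc
      obtain ⟨c', hc'⟩ : ∃ c', c = c' + 1 :=
        ⟨c - 1, by have := Finset.card_pos.mpr hS; omega⟩
      set W := ∑ i ∈ S, B i with hW
      have hAW : IsUnit (A + W) := hinv S (le_refl S)
      rw [Finset.sum_range_succ']
      rw [hzero]
      -- rewrite each term n = m+1 using the splitting
      have hsplit : ∀ m, ∑ σ ∈ ES S (m+1), Pterm B A σ =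
          ∑ i ∈ S, ∑ σ' ∈ ES (S.erase i) m,
            Pterm B (A + B i) σ' * B i * Ring.inverse A := fun m => sum_ES_succ B A S m
      calc Ring.inverse (A + W)
          = Ring.inverse A - Ring.inverse (A + W) * W * Ring.inverse A := by
            have h1 : Ring.inverse (A + W) * (A + W) = 1 :=
              Ring.inverse_mul_cancel _ hAW
            have h2 : Ring.inverse (A + W) * A = 1 - Ring.inverse (A + W) * W := by
              rw [eq_sub_iff_add_eq, ← mul_add, h1]
            calc Ring.inverse (A + W)
                = Ring.inverse (A + W) * (A * Ring.inverse A) := by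
                  rw [Ring.mul_inverse_cancel _ hA, mul_one]
              _ = (Ring.inverse (A + W) * A) * Ring.inverse A := by rw [mul_assoc]
              _ = (1 - Ring.inverse (A + W) * W) * Ring.inverse A := by rw [h2]
              _ = Ring.inverse A - Ring.inverse (A + W) * W * Ring.inverse A := by
                  rw [sub_mul, one_mul]
        _ = (∑ n ∈ Finset.range c, ((-1 : ℤ) ^ (n+1)) •
              ∑ σ ∈ ES S (n+1), Pterm B A σ) + Ring.inverse A := by
            have hcpos : 0 < c := Finset.card_pos.mpr hS
            have hR : ∀ i ∈ S, Ring.inverse (A + W) =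
                ∑ n ∈ Finset.range c, ((-1 : ℤ) ^ n) •
                  ∑ σ' ∈ ES (S.erase i) n, Pterm B (A + B i) σ' := by
              intro i hi
              have hsub : ∀ D ⊆ S.erase i, IsUnit ((A + B i) + ∑ j ∈ D, B j) := by
                intro D hD
                have hiD : i ∉ D := fun h => (Finset.mem_erase.mp (hD h)).1 rfl
                have h1 : (A + B i) + ∑ j ∈ D, B j = A + ∑ j ∈ insert i D, B j := by
                  rw [Finset.sum_insert hiD, ← add_assoc]
                rw [h1]
                refine hinv _ ?_
                intro x hx
                rcases Finset.mem_insert.mp hx with rfl | hx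
                · exact hi
                · exact Finset.mem_of_mem_erase (hD hx)
              have hcard : (S.erase i).card + 1 = c := by
                rw [Finset.card_erase_of_mem hi]; omega
              have := ih (S.erase i) (Finset.erase_ssubset hi) (A + B i) hsub
              rw [hcard] at this
              rw [← this, add_assoc, Finset.add_sum_erase S B hi]
            have hstep : ∀ i ∈ S,
                ∑ n ∈ Finset.range c, ((-1 : ℤ) ^ (n+1)) •
                  ∑ σ' ∈ ES (S.erase i) n,
                    (Pterm B (A + B i) σ' * B i * Ring.inverse A)
                = -(Ring.inverse (A + W) * B i * Ring.inverse A) := by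
              intro i hi
              have e1 : ∀ n, ∑ σ' ∈ ES (S.erase i) n,
                  (Pterm B (A + B i) σ' * B i * Ring.inverse A)
                  = (∑ σ' ∈ ES (S.erase i) n, Pterm B (A + B i) σ')
                      * B i * Ring.inverse A := by
                intro n; rw [Finset.sum_mul, Finset.sum_mul]
              have e2 : ∀ (n : ℕ) (X : R),
                  ((-1 : ℤ) ^ (n+1)) • (X * B i * Ring.inverse A)
                  = -((((-1 : ℤ) ^ n) • X) * B i * Ring.inverse A) := by
                intro n X
                rw [pow_succ, mul_smul, neg_one_zsmul, smul_neg, smul_mul_assoc,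
                  smul_mul_assoc]
              calc ∑ n ∈ Finset.range c, ((-1 : ℤ) ^ (n+1)) •
                    ∑ σ' ∈ ES (S.erase i) n,
                      (Pterm B (A + B i) σ' * B i * Ring.inverse A)
                  = ∑ n ∈ Finset.range c,
                      -((((-1 : ℤ) ^ n) • ∑ σ' ∈ ES (S.erase i) n,
                          Pterm B (A + B i) σ') * B i * Ring.inverse A) := by
                    refine Finset.sum_congr rfl (fun n _ => ?_)
                    rw [e1 n, e2 n]
                _ = -((∑ n ∈ Finset.range c, ((-1 : ℤ) ^ n) •
                        ∑ σ' ∈ ES (S.erase i) n, Pterm B (A + B i) σ')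
                      * B i * Ring.inverse A) := by
                    rw [Finset.sum_neg_distrib, Finset.sum_mul, Finset.sum_mul]
                _ = -(Ring.inverse (A + W) * B i * Ring.inverse A) := by
                    rw [← hR i hi]
            have hT : (∑ n ∈ Finset.range c, ((-1 : ℤ) ^ (n+1)) •
                  ∑ σ ∈ ES S (n+1), Pterm B A σ)
                = -(Ring.inverse (A + W) * W * Ring.inverse A) := by
              calc ∑ n ∈ Finset.range c, ((-1 : ℤ) ^ (n+1)) •
                    ∑ σ ∈ ES S (n+1), Pterm B A σ
                  = ∑ n ∈ Finset.range c, ∑ i ∈ S, ((-1 : ℤ) ^ (n+1)) •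
                      ∑ σ' ∈ ES (S.erase i) n,
                        (Pterm B (A + B i) σ' * B i * Ring.inverse A) := by
                    refine Finset.sum_congr rfl (fun n _ => ?_)
                    rw [hsplit n, Finset.smul_sum]
                _ = ∑ i ∈ S, ∑ n ∈ Finset.range c, ((-1 : ℤ) ^ (n+1)) •
                      ∑ σ' ∈ ES (S.erase i) n,
                        (Pterm B (A + B i) σ' * B i * Ring.inverse A) :=
                    Finset.sum_comm
                _ = ∑ i ∈ S, -(Ring.inverse (A + W) * B i * Ring.inverse A) :=
                    Finset.sum_congr rfl hstep
                _ = -(Ring.inverse (A + W) * W * Ring.inverse A) := by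
                    rw [Finset.sum_neg_distrib, hW, Finset.mul_sum, Finset.sum_mul]
            rw [hT, neg_add_eq_sub]

end Aux

theorem decoupling_expansion {H : Type*} [NormedAddCommGroup H]
    [InnerProductSpace ℂ H] [CompleteSpace H] {N : ℕ}
    (A : H →L[ℂ] H) (B : Fin N → H →L[ℂ] H)
    (hinv : ∀ D : Finset (Fin N), IsUnit (A + ∑ i ∈ D, B i)) :
    Ring.inverse (A + ∑ i, B i) =
      ∑ n ∈ Finset.range (N + 1), ((-1 : ℤ) ^ n) •
        ∑ σ : Fin n ↪ Fin N,
          Ring.inverse A *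
            (((List.finRange n).reverse.map (fun p : Fin n =>
              (B (σ p) -
                (∑ k ∈ Finset.Iic p, B (σ k)) *
                  Ring.inverse (A + ∑ k ∈ Finset.Iic p, B (σ k)) *
                  B (σ p)) * Ring.inverse A)).prod) := by
  have hA : IsUnit A := by simpa using hinv ∅
  have key := gen B Finset.univ A (fun D _ => hinv D)
  rw [show (∑ i, B i) = ∑ i ∈ Finset.univ, B i from rfl, key]
  rw [Finset.card_univ, Fintype.card_fin]
  refine Finset.sum_congr rfl (fun n _ => ?_)
  congr 1
  rw [show ES (Finset.univ : Finset (Fin N)) n = Finset.univ from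
    Finset.filter_true_of_mem (fun σ _ p => Finset.mem_univ _)]
  refine Finset.sum_congr rfl (fun σ _ => ?_)
  rw [prod_shift]
  unfold Pterm
  congr 1
  refine congrArg List.prod ?_
  apply List.map_congr_left
  intro p _
  set Sp := ∑ k ∈ Finset.Iic p, B (σ k) with hSp
  have hU : IsUnit (A + Sp) := by
    have h : Sp = ∑ j ∈ (Finset.Iic p).map σ, B j := by rw [Finset.sum_map]
    rw [h]; exact hinv _
  have h1 : (A + Sp) * Ring.inverse (A + Sp) = 1 := Ring.mul_inverse_cancel _ hU
  have h2 : B (σ p) - Sp * Ring.inverse (A + Sp) * B (σ p)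
      = A * (Ring.inverse (A + Sp) * B (σ p)) := by
    have h3 : A * Ring.inverse (A + Sp) = 1 - Sp * Ring.inverse (A + Sp) := by
      rw [eq_sub_iff_add_eq, ← add_mul, h1]
    rw [← mul_assoc, h3, sub_mul, one_mul]
  rw [h2, ← mul_assoc, Ring.inverse_mul_cancel _ hA, one_mul]
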